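/- Let A ⊆ ℕ^n be a finite set and K ⊆ ℝ^n. An A-truncated multisequence y ∈ ℝ^A admits a representing nonnegative Borel measure supported in K if and only if it admits a finitely atomic representing measure supported in K with at most |A| atoms, i.e., y = Σ_{i=1}^r c_i (u_i^α)_{α∈A} with r ≤ |A|, c_i > 0, u_i ∈ K. -/

import Mathlib

open MeasureTheory Module Set Finset
open scoped RealInnerProductSpace

namespace TchakAux

variable {X : Type} {E : Type} [NormedAddCommGroup E] [InnerProductSpace ℝ E]

/-- membership in the convex cone of positive combinations of values of `f` on `T` -/
def PosComb (f : X → E) (T : Set X) (v : E) : Prop :=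
  ∃ (r : ℕ) (c : Fin r → ℝ) (u : Fin r → X),
    (∀ i, 0 < c i) ∧ (∀ i, u i ∈ T) ∧ v = ∑ i, c i • f (u i)

theorem posComb_zero (f : X → E) (T : Set X) : PosComb f T 0 :=
  ⟨0, Fin.elim0, Fin.elim0, fun i => i.elim0, fun i => i.elim0, by simp⟩

theorem posComb_single (f : X → E) {T : Set X} {u : X} (hu : u ∈ T) {c : ℝ} (hc : 0 < c) :
    PosComb f T (c • f u) :=
  ⟨1, fun _ => c, fun _ => u, fun _ => hc, fun _ => hu, by simp⟩

theorem posComb_add {f : X → E} {T : Set X} {v w : E} (hv : PosComb f T v)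
    (hw : PosComb f T w) : PosComb f T (v + w) := by
  obtain ⟨r₁, c₁, u₁, hc₁, hu₁, rfl⟩ := hv
  obtain ⟨r₂, c₂, u₂, hc₂, hu₂, rfl⟩ := hw
  refine ⟨r₁ + r₂, Fin.append c₁ c₂, Fin.append u₁ u₂, ?_, ?_, ?_⟩
  · intro i
    refine Fin.addCases (fun j => ?_) (fun j => ?_) i
    · simpa using hc₁ j
    · simpa using hc₂ j
  · intro i
    refine Fin.addCases (fun j => ?_) (fun j => ?_) i
    · simpa using hu₁ j
    · simpa using hu₂ j
  · rw [Fin.sum_univ_add]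
    simp

theorem posComb_smul {f : X → E} {T : Set X} {v : E} {t : ℝ} (ht : 0 < t)
    (hv : PosComb f T v) : PosComb f T (t • v) := by
  obtain ⟨r, c, u, hc, hu, rfl⟩ := hv
  refine ⟨r, fun i => t * c i, u, fun i => mul_pos ht (hc i), hu, ?_⟩
  rw [Finset.smul_sum]
  simp [mul_smul]

theorem posComb_convex (f : X → E) (T : Set X) : Convex ℝ {v | PosComb f T v} := by
  intro x hx y hy a b ha hb hab
  rcases eq_or_lt_of_le ha with ha0 | ha
  · have hb1 : b = 1 := by linarith
    simpa [← ha0, hb1] using hy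
  rcases eq_or_lt_of_le hb with hb0 | hb
  · have ha1 : a = 1 := by linarith
    simpa [← hb0, ha1] using hx
  exact posComb_add (posComb_smul ha hx) (posComb_smul hb hy)

theorem posComb_fintype {f : X → E} {T : Set X} {ι : Type} [Fintype ι] (c : ι → ℝ)
    (u : ι → X) (hc : ∀ i, 0 < c i) (hu : ∀ i, u i ∈ T) :
    PosComb f T (∑ i, c i • f (u i)) := by
  classical
  let e := (Fintype.equivFin ι).symm
  exact ⟨Fintype.card ι, c ∘ e, u ∘ e, fun i => hc _, fun i => hu _,
    (Equiv.sum_comp e (fun i => c i • f (u i))).symm⟩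


/-- If the values of `f` on `T` span `E`, the positive-combination cone has
nonempty interior. -/
theorem posComb_interior [FiniteDimensional ℝ E] {f : X → E} {T : Set X}
    (hspan : Submodule.span ℝ (f '' T) = ⊤) :
    ∃ s₀, s₀ ∈ interior {v | PosComb f T v} := by
  classical
  obtain ⟨b, hbT, hbspan, hbli⟩ := exists_linearIndependent ℝ (f '' T)
  haveI : Fintype b := (hbli.setFinite).fintype
  have hspanb : Submodule.span ℝ (Set.range ((↑) : b → E)) = ⊤ := by
    rw [Subtype.range_coe, hbspan, hspan]
  let B : Basis b ℝ E := Basis.mk hbli (by rw [hspanb])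
  have hB : ∀ i : b, B i = (i : E) := fun i => Basis.mk_apply _ _ i
  -- choose preimages
  have hw : ∀ i : b, ∃ x, x ∈ T ∧ f x = (i : E) := fun i => by
    obtain ⟨x, hx, hfx⟩ := hbT i.2
    exact ⟨x, hx, hfx⟩
  choose w hwT hwf using hw
  refine ⟨∑ i : b, (1 : ℝ) • f (w i), ?_⟩
  rw [mem_interior]
  refine ⟨(B.equivFunL : E → b → ℝ) ⁻¹' {z | ∀ i, 0 < z i}, ?_, ?_, ?_⟩
  · -- subset of the cone
    intro y hy
    have hyrep : y = ∑ i : b, B.equivFun y i • f (w i) := by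
      conv_lhs => rw [← B.sum_equivFun y]
      refine Finset.sum_congr rfl fun i _ => ?_
      rw [hB, hwf]
    rw [Set.mem_setOf_eq, hyrep]
    exact posComb_fintype _ _ (fun i => hy i) hwT
  · -- open
    refine (B.equivFunL).continuous.isOpen_preimage _ ?_
    have : {z : b → ℝ | ∀ i, 0 < z i} = ⋂ i, (fun z : b → ℝ => z i) ⁻¹' Set.Ioi 0 := by
      ext z; simp [Set.mem_iInter]
    rw [this]
    exact isOpen_iInter_of_finite fun i => (continuous_apply i).isOpen_preimage _ isOpen_Ioi
  · -- membership
    have : (∑ i : b, (1 : ℝ) • f (w i)) = ∑ i : b, B i := by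
      refine Finset.sum_congr rfl fun i _ => ?_
      rw [hB, hwf, one_smul]
    simp only [Set.mem_preimage, this, Set.mem_setOf_eq]
    intro i
    have : B.equivFun (∑ j : b, B j) i = 1 := by
      rw [map_sum]
      have : ∀ j : b, B.equivFun (B j) = Pi.single j (1:ℝ) := by
        intro j
        ext k
        simp [Basis.equivFun_apply, Basis.repr_self, Finsupp.single_apply, Pi.single_apply, eq_comm]
      simp only [this]
      simp [Finset.sum_pi_single]
    rw [show (B.equivFunL : E → b → ℝ) = B.equivFun by rfl]
    rw [this]
    norm_num


/-- Separation of a point from the cone when the cone spans. -/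
theorem exists_sep [FiniteDimensional ℝ E] [CompleteSpace E] {f : X → E} {T : Set X}
    (hspan : Submodule.span ℝ (f '' T) = ⊤) {m : E} (hm : ¬ PosComb f T m) :
    ∃ ℓ : E, ℓ ≠ 0 ∧ (∀ v, PosComb f T v → ⟪ℓ, v⟫ ≤ 0) ∧ 0 ≤ ⟪ℓ, m⟫ := by
  classical
  obtain ⟨s₀, hs₀⟩ := posComb_interior hspan
  set C := {v | PosComb f T v} with hCdef
  have hC : Convex ℝ C := posComb_convex f T
  have hmC : m ∉ C := hm
  have hmint : m ∉ interior C := fun h => hmC (interior_subset h)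
  obtain ⟨φ, hφ⟩ := geometric_hahn_banach_open_point (hC.interior) isOpen_interior hmint
  -- extend the inequality from the interior to all of C
  have hφC : ∀ v ∈ C, φ v ≤ φ m := by
    intro v hv
    by_contra hgt
    push_neg at hgt
    set d : ℝ := φ v - φ m with hd
    have hdpos : 0 < d := by simp [hd]; linarith
    set M : ℝ := |φ s₀ - φ v| + 1 with hM
    have hMpos : 0 < M := by positivity
    set t : ℝ := min 1 (d / (2 * M)) with htdef
    have htpos : 0 < t := lt_min one_pos (by positivity)
    have ht1 : t ≤ 1 := min_le_left _ _
    have hmem : v + t • (s₀ - v) ∈ interior C :=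
      hC.add_smul_sub_mem_interior hv hs₀ ⟨htpos, ht1⟩
    have hlt := hφ _ hmem
    rw [map_add, _root_.map_smul] at hlt
    have habs : |φ (s₀ - v)| ≤ M := by
      rw [map_sub, hM]
      linarith [abs_nonneg (φ s₀ - φ v)]
    have h1 : t • φ (s₀ - v) = t * φ (s₀ - v) := rfl
    have h2 : t * φ (s₀ - v) ≥ -(d / 2) := by
      have : |t * φ (s₀ - v)| ≤ (d / (2 * M)) * M := by
        rw [abs_mul, abs_of_pos htpos]
        exact mul_le_mul (min_le_right _ _) habs (abs_nonneg _) (by positivity)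
      have h3 : (d / (2 * M)) * M = d / 2 := by field_simp
      rw [h3] at this
      linarith [abs_le.mp this]
    rw [h1] at hlt
    linarith
  have hφ0 : (0:ℝ) ≤ φ m := by
    have := hφC 0 (posComb_zero f T)
    simpa using this
  have hφneg : ∀ v ∈ C, φ v ≤ 0 := by
    intro v hv
    by_contra hgt
    push_neg at hgt
    have hmemt : ((φ m + 1) / φ v) • v ∈ C := posComb_smul (by positivity) hv
    have := hφC _ hmemt
    rw [_root_.map_smul] at this
    have h4 : ((φ m + 1) / φ v) • φ v = φ m + 1 := by
      simp only [smul_eq_mul]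
      field_simp
    rw [h4] at this
    linarith
  refine ⟨(InnerProductSpace.toDual ℝ E).symm φ, ?_, ?_, ?_⟩
  · intro h0
    have hs := hφ s₀ hs₀
    have h1 : φ s₀ = ⟪(InnerProductSpace.toDual ℝ E).symm φ, s₀⟫ :=
      (InnerProductSpace.toDual_symm_apply).symm
    have h2 : φ m = ⟪(InnerProductSpace.toDual ℝ E).symm φ, m⟫ :=
      (InnerProductSpace.toDual_symm_apply).symm
    rw [h1, h2, h0] at hs
    simp at hs
  · intro v hv
    rw [InnerProductSpace.toDual_symm_apply]
    exact hφneg v hv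
  · rw [InnerProductSpace.toDual_symm_apply]
    exact hφ0


/-- Carathéodory for convex cones: a positive combination can be rewritten using at most
`finrank` of the original vectors. -/
theorem caratheodory_cone {E : Type} [AddCommGroup E] [Module ℝ E] [FiniteDimensional ℝ E] :
    ∀ (r : ℕ) (c : Fin r → ℝ) (v : Fin r → E), (∀ i, 0 < c i) →
    ∃ (r' : ℕ) (c' : Fin r' → ℝ) (φ : Fin r' → Fin r),
      r' ≤ finrank ℝ E ∧ (∀ i, 0 < c' i) ∧ ∑ i, c' i • v (φ i) = ∑ i, c i • v i := by
  intro r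
  induction r using Nat.strong_induction_on with
  | _ r IH =>
  intro c v hc
  classical
  by_cases hli : LinearIndependent ℝ v
  · refine ⟨r, c, id, ?_, hc, rfl⟩
    simpa using hli.fintype_card_le_finrank
  · obtain ⟨g, hg0, i₀, hgi₀⟩ := Fintype.not_linearIndependent_iff.mp hli
    -- find a relation with some positive coefficient
    obtain ⟨a, ha0, i₁, hai₁⟩ : ∃ a : Fin r → ℝ, (∑ i, a i • v i = 0) ∧ ∃ i, 0 < a i := by
      rcases lt_or_gt_of_ne hgi₀ with h | h
      · exact ⟨-g, by simpa using hg0, i₀, by simpa using h⟩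
      · exact ⟨g, hg0, i₀, h⟩
    have hr1 : 0 < r := i₁.pos
    set P : Finset (Fin r) := Finset.univ.filter (fun i => 0 < a i) with hP
    have hPne : P.Nonempty := ⟨i₁, by simp [hP, hai₁]⟩
    set t : ℝ := P.inf' hPne (fun i => c i / a i) with ht
    have htpos : 0 < t := by
      rw [ht, Finset.lt_inf'_iff]
      intro i hi
      have hai : 0 < a i := by simpa [hP] using hi
      exact div_pos (hc i) hai
    set c' : Fin r → ℝ := fun i => c i - t * a i with hc'
    have hc'nonneg : ∀ i, 0 ≤ c' i := by
      intro i
      rcases le_or_gt (a i) 0 with h | h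
      · have : t * a i ≤ 0 := mul_nonpos_of_nonneg_of_nonpos htpos.le h
        have := (hc i).le
        simp only [hc']
        linarith
      · have hle : t ≤ c i / a i := Finset.inf'_le _ (by simp [hP, h])
        have : t * a i ≤ c i := by
          rw [le_div_iff₀ h] at hle
          exact hle
        simp only [hc']
        linarith
    obtain ⟨i₂, hi₂P, hi₂⟩ := Finset.exists_mem_eq_inf' hPne (fun i => c i / a i)
    have hai₂ : 0 < a i₂ := by simpa [hP] using hi₂P
    have htv : t = c i₂ / a i₂ := ht.trans hi₂
    have hc'i₂ : c' i₂ = 0 := by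
      simp only [hc', htv]
      field_simp
      simp
    have hsum' : ∑ i, c' i • v i = ∑ i, c i • v i := by
      simp only [hc', sub_smul, mul_smul, Finset.sum_sub_distrib]
      rw [← Finset.smul_sum, ha0, smul_zero, sub_zero]
    -- restrict to the support of c'
    set s : Finset (Fin r) := Finset.univ.filter (fun i => 0 < c' i) with hs
    have hscard : s.card < r := by
      have hi₂ns : i₂ ∉ s := by simp [hs, hc'i₂]
      have : s ⊆ Finset.univ.erase i₂ := by
        intro i hi
        exact Finset.mem_erase.mpr ⟨fun h => hi₂ns (h ▸ hi), Finset.mem_univ i⟩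
      calc s.card ≤ (Finset.univ.erase i₂).card := Finset.card_le_card this
        _ < Finset.univ.card := Finset.card_erase_lt_of_mem (Finset.mem_univ i₂)
        _ = r := by simp
    have hsum'' : ∑ i ∈ s, c' i • v i = ∑ i, c' i • v i := by
      refine Finset.sum_subset (Finset.subset_univ s) ?_
      intro i _ hi
      have : c' i = 0 := le_antisymm (by simpa [hs] using hi) (hc'nonneg i)
      simp [this]
    set e := s.orderIsoOfFin (rfl : s.card = s.card) with he
    have hsum3 : ∑ j : Fin s.card, c' (e j) • v (e j) = ∑ i ∈ s, c' i • v i := by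
      rw [← Finset.sum_coe_sort s (fun i => c' i • v i)]
      exact Equiv.sum_comp e.toEquiv (fun i => c' (i : Fin r) • v (i : Fin r))
    obtain ⟨r', c₃, φ₃, hr', hc₃, hsum₃⟩ := IH s.card hscard (fun j => c' (e j))
      (fun j => v (e j)) (fun j => by
        exact (Finset.mem_filter.mp (e j).2).2)
    refine ⟨r', c₃, fun i => (e (φ₃ i) : Fin r), hr', hc₃, ?_⟩
    rw [hsum₃, hsum3, hsum'', hsum']


/-- Key lemma: the integral of an integrable function is a positive combination of
finitely many of its values on a full-measure set (Richter/Tchakaloff). -/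
theorem tchak_key : ∀ (N : ℕ) (E : Type) [NormedAddCommGroup E] [InnerProductSpace ℝ E]
    [FiniteDimensional ℝ E], finrank ℝ E ≤ N →
    ∀ {X : Type} [MeasurableSpace X] (μ : Measure X) (f : X → E),
    Integrable f μ → ∀ (T : Set X), μ Tᶜ = 0 →
    PosComb f T (∫ x, f x ∂μ) := by
  intro N
  induction N with
  | zero =>
    intro E _ _ _ hE X _ μ f hf T hT
    haveI : Subsingleton E := finrank_zero_iff.mp (le_antisymm hE (Nat.zero_le _))
    have : (∫ x, f x ∂μ) = 0 := Subsingleton.elim _ _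
    rw [this]
    exact ⟨0, Fin.elim0, Fin.elim0, fun i => i.elim0, fun i => i.elim0, by simp⟩
  | succ N IH =>
    intro E _ _ _ hE X _ μ f hf T hT
    classical
    set m := ∫ x, f x ∂μ with hmdef
    by_cases hm : PosComb f T m
    · exact hm
    -- obtain a separating functional
    have hsep : ∃ ℓ : E, ℓ ≠ 0 ∧ (∀ x ∈ T, ⟪ℓ, f x⟫ ≤ 0) ∧ 0 ≤ ⟪ℓ, m⟫ := by
      by_cases hspan : Submodule.span ℝ (f '' T) = ⊤
      · obtain ⟨ℓ, hℓ0, hneg, hpos⟩ := exists_sep hspan hm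
        refine ⟨ℓ, hℓ0, fun x hx => ?_, hpos⟩
        have : PosComb f T ((1:ℝ) • f x) := posComb_single f hx one_pos
        rw [one_smul] at this
        exact hneg _ this
      · -- take ℓ orthogonal to the span
        have hbot : (Submodule.span ℝ (f '' T))ᗮ ≠ ⊥ := by
          intro h
          exact hspan (Submodule.orthogonal_eq_bot_iff.mp h)
        obtain ⟨ℓ, hℓmem, hℓ0⟩ := (Submodule.ne_bot_iff _).mp hbot
        have hzero : ∀ x ∈ T, ⟪ℓ, f x⟫ = 0 := by
          intro x hx
          have hfx : f x ∈ Submodule.span ℝ (f '' T) :=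
            Submodule.subset_span ⟨x, hx, rfl⟩
          have := (Submodule.mem_orthogonal _ ℓ).mp hℓmem _ hfx
          rwa [real_inner_comm] at this
        refine ⟨ℓ, hℓ0, fun x hx => le_of_eq (hzero x hx), ?_⟩
        have hae : ∀ᵐ x ∂μ, x ∈ T := hT
        have : (∫ x, ⟪ℓ, f x⟫ ∂μ) = 0 := by
          rw [integral_congr_ae (g := fun _ => (0:ℝ))
            (hae.mono fun x hx => hzero x hx)]
          simp
        rw [← integral_inner hf] at *
        rw [this]
    obtain ⟨ℓ, hℓ0, hneg, hpos⟩ := hsep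
    -- the inner product with ℓ vanishes a.e.
    have hae : ∀ᵐ x ∂μ, x ∈ T := hT
    have hgint : Integrable (fun x => ⟪ℓ, f x⟫) μ := hf.const_inner ℓ
    have hgnonpos : (fun x => ⟪ℓ, f x⟫) ≤ᵐ[μ] 0 := hae.mono fun x hx => hneg x hx
    have hintm : (∫ x, ⟪ℓ, f x⟫ ∂μ) = ⟪ℓ, m⟫ := integral_inner hf ℓ
    have hint0 : (∫ x, ⟪ℓ, f x⟫ ∂μ) = 0 :=
      le_antisymm (integral_nonpos_of_ae hgnonpos) (hintm ▸ hpos)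
    have hg0 : (fun x => ⟪ℓ, f x⟫) =ᵐ[μ] 0 := by
      have hneg' : (0:X → ℝ) ≤ᵐ[μ] fun x => -⟪ℓ, f x⟫ :=
        hgnonpos.mono fun x hx => by simpa using hx
      have : (∫ x, -⟪ℓ, f x⟫ ∂μ) = 0 := by rw [integral_neg, hint0, neg_zero]
      have := (integral_eq_zero_iff_of_nonneg_ae hneg' hgint.neg).mp this
      exact this.mono fun x hx => by simpa using hx
    -- the reduced full-measure set
    set T' : Set X := T ∩ {x | ⟪ℓ, f x⟫ = 0} with hT'def
    have hT' : μ T'ᶜ = 0 := by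
      rw [Set.compl_inter]
      refine measure_union_null hT ?_
      have := ae_iff.mp hg0
      rw [Set.compl_setOf]
      simpa using this
    -- the orthogonal complement
    set V' : Submodule ℝ E := (ℝ ∙ ℓ)ᗮ with hV'def
    have hrank : finrank ℝ V' ≤ N := by
      have h1 : finrank ℝ (ℝ ∙ ℓ) + finrank ℝ V' = finrank ℝ E :=
        Submodule.finrank_add_finrank_orthogonal _
      rw [finrank_span_singleton hℓ0] at h1
      omega
    set f' : X → V' := fun x => Submodule.orthogonalProjection V' (f x) with hf'def
    have hf'int : Integrable f' μ := (Submodule.orthogonalProjection V').integrable_comp hf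
    have hmain := IH V' hrank μ f' hf'int T' hT'
    have hint' : (∫ x, f' x ∂μ) = Submodule.orthogonalProjection V' m :=
      ContinuousLinearMap.integral_comp_comm _ hf
    obtain ⟨r, c, u, hc, hu, hsum⟩ := hmain
    rw [hint'] at hsum
    have hmV' : m ∈ V' := by
      rw [hV'def, Submodule.mem_orthogonal_singleton_iff_inner_right]
      rw [← hintm]
      exact hint0
    have hfu : ∀ i, f (u i) ∈ V' := by
      intro i
      rw [hV'def, Submodule.mem_orthogonal_singleton_iff_inner_right]
      exact (hu i).2
    have hcoe : m = ∑ i, c i • f (u i) := by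
      have := congrArg (Submodule.subtype V') hsum
      simp only [map_sum, _root_.map_smul, Submodule.coe_subtype] at this
      rw [show ((Submodule.orthogonalProjection V' m : V') : E) = m from Submodule.starProjection_eq_self_iff.mpr hmV'] at this
      rw [this]
      refine Finset.sum_congr rfl fun i _ => ?_
      congr 1
      simp only [hf'def]
      exact Submodule.starProjection_eq_self_iff.mpr (hfu i)
    exact ⟨r, c, u, hc, fun i => (hu i).1, hcoe⟩


end TchakAux

open TchakAux

/-- An `A`-truncated multisequence `y ∈ ℝ^A` admits a representing
nonnegative Borel measure supported in `K` iff it admits a finitely atomic representing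
measure supported in `K` with at most `|A|` atoms. -/
theorem atms_admits_measure_iff_finitely_atomic
    (n : ℕ) (A : Finset (Fin n → ℕ)) (K : Set (Fin n → ℝ)) (y : (Fin n → ℕ) → ℝ) :
    (∃ μ : Measure (Fin n → ℝ), μ Kᶜ = 0 ∧
      ∀ α ∈ A, Integrable (fun x => ∏ j, x j ^ α j) μ ∧
        y α = ∫ x, ∏ j, x j ^ α j ∂μ) ↔
    (∃ (r : ℕ) (c : Fin r → ℝ) (u : Fin r → (Fin n → ℝ)),
      r ≤ A.card ∧ (∀ i, 0 < c i) ∧ (∀ i, u i ∈ K) ∧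
      ∀ α ∈ A, y α = ∑ i, c i * ∏ j, u i j ^ α j) := by
  classical
  constructor
  · rintro ⟨μ, hK, h⟩
    set ι := {α // α ∈ A} with hι
    set E := EuclideanSpace ℝ ι with hE
    set g : ι → (Fin n → ℝ) → ℝ := fun α x => ∏ j, x j ^ (α : Fin n → ℕ) j with hg
    set f : (Fin n → ℝ) → E := fun x => ∑ α : ι, g α x • EuclideanSpace.single α (1:ℝ)
      with hf
    have hgint : ∀ α : ι, Integrable (g α) μ := fun α => (h α α.2).1
    have hfint : Integrable f μ :=
      integrable_finset_sum _ (fun α _ => (hgint α).smul_const _)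
    have hintf : (∫ x, f x ∂μ) = ∑ α : ι, (y (α : Fin n → ℕ)) • EuclideanSpace.single α (1:ℝ) := by
      rw [hf, integral_finset_sum _ (fun α _ => (hgint α).smul_const _)]
      refine Finset.sum_congr rfl fun α _ => ?_
      rw [integral_smul_const, ← (h α α.2).2]
    have hkey := tchak_key (finrank ℝ E) E le_rfl μ f hfint K hK
    obtain ⟨r₀, c₀, u₀, hc₀, hu₀, hsum₀⟩ := hkey
    obtain ⟨r, c, φ, hrle, hc, hsum⟩ := caratheodory_cone r₀ c₀ (fun i => f (u₀ i)) hc₀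
    have hrle' : r ≤ A.card := by
      rwa [finrank_euclideanSpace, Fintype.card_coe] at hrle
    refine ⟨r, c, fun i => u₀ (φ i), hrle', hc, fun i => hu₀ (φ i), ?_⟩
    intro α hα
    set a : ι := ⟨α, hα⟩ with ha
    have heq : (∫ x, f x ∂μ) = ∑ i, c i • f (u₀ (φ i)) := by rw [hsum₀, ← hsum]
    have heval := congrArg (fun v => v a) heq
    -- evaluate components
    have hL : (∫ x, f x ∂μ) a = y α := by
      rw [hintf]
      show (∑ β : ι, (y (β : Fin n → ℕ)) • EuclideanSpace.single β (1:ℝ)) a = y α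
      rw [WithLp.ofLp_sum, Finset.sum_apply]
      simp [EuclideanSpace.single_apply]
      rw [Finset.sum_eq_single a (fun b _ hb => if_neg (Ne.symm hb)) (by simp)]
      simp [ha]
    have hfeval : ∀ x, f x a = ∏ j, x j ^ α j := by
      intro x
      show (∑ β : ι, g β x • EuclideanSpace.single β (1:ℝ)) a = _
      rw [WithLp.ofLp_sum, Finset.sum_apply]
      simp [EuclideanSpace.single_apply, hg, ha]
      rw [Finset.sum_eq_single a (fun b _ hb => if_neg (Ne.symm hb)) (by simp)]
      simp [ha]
    have hR : (∑ i, c i • f (u₀ (φ i))) a = ∑ i, c i * ∏ j, (u₀ (φ i)) j ^ α j := by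
      rw [WithLp.ofLp_sum, Finset.sum_apply]
      refine Finset.sum_congr rfl fun i _ => ?_
      show c i * (f (u₀ (φ i)) a) = _
      rw [hfeval]
    rw [← hL, heval, hR]
  · rintro ⟨r, c, u, hr, hc, hu, hy⟩
    refine ⟨∑ i : Fin r, (ENNReal.ofReal (c i)) • Measure.dirac (u i), ?_, ?_⟩
    · rw [Measure.finset_sum_apply]
      refine Finset.sum_eq_zero fun i _ => ?_
      rw [Measure.smul_apply]
      have h0 : Measure.dirac (u i) Kᶜ = 0 := by
        refine measure_mono_null (fun x hx => ?_) (?_ : Measure.dirac (u i) {u i}ᶜ = 0)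
        · intro hxx
          exact hx (by rw [Set.mem_singleton_iff.mp hxx]; exact hu i)
        · rw [Measure.dirac_apply' _ (MeasurableSet.singleton _).compl]
          simp
      rw [h0, smul_zero]
    · intro α hα
      have hmeas : StronglyMeasurable (fun x : Fin n → ℝ => ∏ j, x j ^ α j) := by
        refine Continuous.stronglyMeasurable ?_
        exact continuous_finset_prod _ fun j _ => (continuous_apply j).pow _
      have hint : ∀ i : Fin r, Integrable (fun x : Fin n → ℝ => ∏ j, x j ^ α j)
          ((ENNReal.ofReal (c i)) • Measure.dirac (u i)) := by
        intro i
        refine (integrable_smul_measure (by simpa [ENNReal.ofReal_eq_zero, not_le] using hc i) (by simp)).mpr ?_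
        refine (integrable_const (∏ j, (u i) j ^ α j)).congr ?_
        rw [ae_dirac_eq]
        exact Filter.eventually_pure.mpr rfl
      constructor
      · exact (integrable_finset_sum_measure).mpr fun i _ => hint i
      · rw [integral_finset_sum_measure fun i _ => hint i]
        rw [hy α hα]
        refine Finset.sum_congr rfl fun i _ => ?_
        rw [integral_smul_measure, integral_dirac, ENNReal.toReal_ofReal (hc i).le,
          smul_eq_mul]
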